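/- Let T = (X, →) be an infinite tournament such that for any distinct x, y ∈ X, both Γ⁺(x) \ Γ⁺(y) and Γ⁺(y) \ Γ⁺(x) are infinite. Then T is cofinally rigid: every finite subset U of X is contained in a finite subset V such that the induced subtournament on V has trivial automorphism group. -/

import Mathlib

def IsTournament {X : Type*} (r : X → X → Prop) : Prop :=
  (∀ x, ¬ r x x) ∧ ∀ x y : X, x ≠ y → (r x y ↔ ¬ r y x)

set_option maxHeartbeats 1000000

section Statement15Aux
variable {X : Type*} {r : X → X → Prop}

lemma tourn_irrefl (ht : IsTournament r) (x : X) : ¬ r x x := ht.1 x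

lemma tourn_asymm (ht : IsTournament r) {x y : X} (h : r x y) : ¬ r y x := by
  by_cases hxy : x = y
  · subst hxy; exact absurd h (ht.1 x)
  · exact fun h' => ((ht.2 x y hxy).mp h) h'

lemma tourn_total (ht : IsTournament r) {x y : X} (hxy : x ≠ y) : r x y ∨ r y x := by
  by_cases h : r x y
  · exact Or.inl h
  · exact Or.inr ((ht.2 y x (Ne.symm hxy)).mpr h)

lemma tourn_of_not (ht : IsTournament r) {x y : X} (hxy : x ≠ y) (h : ¬ r y x) : r x y :=
  (ht.2 x y hxy).mpr h

/-- witnesses: for distinct x y, infinitely many v with x → v → y -/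
lemma witness_infinite (ht : IsTournament r)
    (hdiff : ∀ x y : X, x ≠ y →
      ({v | r x v} \ {v | r y v} : Set X).Infinite ∧
      ({v | r y v} \ {v | r x v} : Set X).Infinite)
    {x y : X} (hxy : x ≠ y) : {v : X | r x v ∧ r v y}.Infinite := by
  have h1 := (hdiff x y hxy).1
  have hsub : ({v | r x v} \ {v | r y v} : Set X) ⊆ insert y {v : X | r x v ∧ r v y} := by
    intro v hv
    rcases hv with ⟨hxv, hyv⟩
    by_cases hvy : v = y
    · exact hvy ▸ Set.mem_insert _ _
    · exact Set.mem_insert_iff.mpr (Or.inr ⟨hxv, tourn_of_not ht hvy hyv⟩)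
  have : (insert y {v : X | r x v ∧ r v y}).Infinite := Set.Infinite.mono hsub h1
  have := this.diff (Set.finite_singleton y)
  refine this.mono ?_
  intro v hv
  rcases hv with ⟨hv, hvy⟩
  rcases Set.mem_insert_iff.mp hv with h | h
  · exact absurd (Set.mem_singleton_iff.mpr h) hvy
  · exact h

/-- constant type extraction over a finite set -/
lemma const_type (ht : IsTournament r) (P : Finset X) :
    ∀ (S : Set X), S.Infinite → ∃ T ⊆ S, T.Infinite ∧
      ∀ p ∈ P, (∀ v ∈ T, r p v) ∨ (∀ v ∈ T, ¬ r p v) := by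
  classical
  induction P using Finset.induction_on with
  | empty => exact fun S hS => ⟨S, le_refl _, hS, by simp⟩
  | @insert p P hp ih =>
    intro S hS
    obtain ⟨T, hTS, hTinf, hTtype⟩ := ih S hS
    have hsplit : T ⊆ (T ∩ {v | r p v}) ∪ (T ∩ {v | ¬ r p v}) := by
      intro v hv; by_cases h : r p v
      · exact Set.mem_union_left _ ⟨hv, h⟩
      · exact Set.mem_union_right _ ⟨hv, h⟩
    have : (T ∩ {v | r p v}).Infinite ∨ (T ∩ {v | ¬ r p v}).Infinite := by
      by_contra hc
      push_neg at hc
      exact (Set.Infinite.mono hsplit hTinf) (hc.1.union hc.2)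
    rcases this with h | h
    · refine ⟨T ∩ {v | r p v}, (Set.inter_subset_left).trans hTS, h, ?_⟩
      intro q hq
      rcases Finset.mem_insert.mp hq with rfl | hq'
      · exact Or.inl (fun v hv => hv.2)
      · rcases hTtype q hq' with h' | h'
        · exact Or.inl (fun v hv => h' v hv.1)
        · exact Or.inr (fun v hv => h' v hv.1)
    · refine ⟨T ∩ {v | ¬ r p v}, (Set.inter_subset_left).trans hTS, h, ?_⟩
      intro q hq
      rcases Finset.mem_insert.mp hq with rfl | hq'
      · exact Or.inr (fun v hv => hv.2)
      · rcases hTtype q hq' with h' | h'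
        · exact Or.inl (fun v hv => h' v hv.1)
        · exact Or.inr (fun v hv => h' v hv.1)

lemma seq_extract (ht : IsTournament r) :
    ∀ (k : ℕ) (S : Set X), S.Infinite →
    ∃ (c : Fin k → X) (ε : Fin k → Bool), (∀ i, c i ∈ S) ∧
      ∀ i j : Fin k, i < j →
        (ε i = true → r (c i) (c j)) ∧ (ε i = false → r (c j) (c i)) := by
  intro k
  induction k with
  | zero =>
    intro S hS
    exact ⟨Fin.elim0, Fin.elim0, fun i => i.elim0, fun i => i.elim0⟩
  | succ k ih =>
    intro S hS
    obtain ⟨v, hv⟩ := hS.nonempty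
    have hdel : (S \ {v}).Infinite := hS.diff (Set.finite_singleton v)
    have hsplit : (S \ {v}) ⊆ ((S \ {v}) ∩ {w | r v w}) ∪ ((S \ {v}) ∩ {w | r w v}) := by
      intro w hw
      rcases tourn_total ht (fun h : v = w => hw.2 (by simp [h])) with h | h
      · exact Set.mem_union_left _ ⟨hw, h⟩
      · exact Set.mem_union_right _ ⟨hw, h⟩
    have hone : ((S \ {v}) ∩ {w | r v w}).Infinite ∨ ((S \ {v}) ∩ {w | r w v}).Infinite := by
      by_contra hc
      push_neg at hc
      exact (hdel.mono hsplit) (hc.1.union hc.2)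
    rcases hone with hinf | hinf
    · obtain ⟨c', ε', hmem, hrel⟩ := ih _ hinf
      refine ⟨Fin.cons v c', Fin.cons true ε', ?_, ?_⟩
      · intro i
        rcases Fin.eq_zero_or_eq_succ i with rfl | ⟨i', rfl⟩
        · simpa using hv
        · simpa using ((hmem i').1).1
      · intro i j hij
        rcases Fin.eq_zero_or_eq_succ j with rfl | ⟨j', rfl⟩
        · exact absurd hij (by simp)
        rcases Fin.eq_zero_or_eq_succ i with rfl | ⟨i', rfl⟩
        · constructor
          · intro _; simpa using (hmem j').2
          · intro h; simp at h
        · have hij' : i' < j' := by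
            simpa [Fin.succ_lt_succ_iff] using hij
          simpa using hrel i' j' hij'
    · obtain ⟨c', ε', hmem, hrel⟩ := ih _ hinf
      refine ⟨Fin.cons v c', Fin.cons false ε', ?_, ?_⟩
      · intro i
        rcases Fin.eq_zero_or_eq_succ i with rfl | ⟨i', rfl⟩
        · simpa using hv
        · simpa using ((hmem i').1).1
      · intro i j hij
        rcases Fin.eq_zero_or_eq_succ j with rfl | ⟨j', rfl⟩
        · exact absurd hij (by simp)
        rcases Fin.eq_zero_or_eq_succ i with rfl | ⟨i', rfl⟩
        · constructor
          · intro h; simp at h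
          · intro _; simpa using (hmem j').2
        · have hij' : i' < j' := by
            simpa [Fin.succ_lt_succ_iff] using hij
          simpa using hrel i' j' hij'

lemma image_of_chain (ht : IsTournament r) {S : Set X} {k : ℕ} (d : Fin k → X)
    (hmem : ∀ i, d i ∈ S) (hch : ∀ i j : Fin k, i < j → r (d i) (d j)) :
    ∃ B : Finset X, ↑B ⊆ S ∧ B.card = k ∧
      (∀ a ∈ B, ∀ b ∈ B, ∀ c ∈ B, r a b → r b c → r a c) := by
  classical
  have hinj : Function.Injective d := by
    intro i j hij
    rcases lt_trichotomy i j with h | h | h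
    · exact absurd (hij ▸ hch i j h) (ht.1 (d j))
    · exact h
    · exact absurd (hij ▸ hch j i h) (ht.1 (d j))
  have hlt : ∀ i j : Fin k, r (d i) (d j) → i < j := by
    intro i j hr
    rcases lt_trichotomy i j with h | h | h
    · exact h
    · exact absurd (h ▸ hr) (ht.1 (d j))
    · exact absurd hr (tourn_asymm ht (hch j i h))
  refine ⟨Finset.univ.image d, ?_, ?_, ?_⟩
  · intro x hx
    simp only [Finset.coe_image, Set.mem_image] at hx
    obtain ⟨i, _, rfl⟩ := hx
    exact hmem i
  · rw [Finset.card_image_of_injective _ hinj]; simp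
  · intro a ha b hb c hc hab hbc
    simp only [Finset.mem_image] at ha hb hc
    obtain ⟨i, _, rfl⟩ := ha
    obtain ⟨j, _, rfl⟩ := hb
    obtain ⟨l, _, rfl⟩ := hc
    exact hch i l ((hlt i j hab).trans (hlt j l hbc))

/-- extraction of a transitive subset of any size from an infinite set -/
lemma exists_trans_subset (ht : IsTournament r) (S : Set X) (hS : S.Infinite) (k : ℕ) :
    ∃ B : Finset X, ↑B ⊆ S ∧ B.card = k ∧
      (∀ a ∈ B, ∀ b ∈ B, ∀ c ∈ B, r a b → r b c → r a c) := by
  classical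
  obtain ⟨c, ε, hmem, hrel⟩ := seq_extract ht (2 * k) S hS
  have hcard : k ≤ (Finset.univ.filter (fun i => ε i = true)).card ∨
      k ≤ (Finset.univ.filter (fun i => ¬ (ε i = true))).card := by
    have hsum := Finset.card_filter_add_card_filter_not
      (s := (Finset.univ : Finset (Fin (2*k)))) (p := fun i => ε i = true)
    have huniv : (Finset.univ : Finset (Fin (2*k))).card = 2*k := by simp
    by_contra hc
    push_neg at hc
    simp only [ne_eq] at hc hsum ⊢
    omega
  rcases hcard with hk | hk
  · obtain ⟨A, hAsub, hAcard⟩ := Finset.exists_subset_card_eq hk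
    have e := A.orderIsoOfFin hAcard
    refine image_of_chain ht (fun i => c (e i)) (fun i => hmem _) ?_
    intro i j hij
    have hmemA : (e i : Fin (2*k)) ∈ Finset.univ.filter (fun i => ε i = true) :=
      hAsub (e i).2
    have htrue : ε (e i) = true := by simpa using hmemA
    have : (e i : Fin (2*k)) < e j := by
      exact_mod_cast (OrderIso.lt_iff_lt e).mpr hij
    exact (hrel _ _ this).1 htrue
  · obtain ⟨A, hAsub, hAcard⟩ := Finset.exists_subset_card_eq hk
    have e := A.orderIsoOfFin hAcard
    refine image_of_chain ht (fun i => c (e i.rev)) (fun i => hmem _) ?_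
    intro i j hij
    have hmemA : (e j.rev : Fin (2*k)) ∈ Finset.univ.filter (fun i => ¬ (ε i = true)) :=
      hAsub (e j.rev).2
    have hfalse : ε (e j.rev) = false := by
      simp only [Finset.mem_filter] at hmemA
      exact Bool.not_eq_true _ ▸ (by simpa using hmemA.2)
    have hrev : j.rev < i.rev := by
      exact Fin.rev_lt_rev.mpr hij
    have : (e j.rev : Fin (2*k)) < e i.rev := by
      exact_mod_cast (OrderIso.lt_iff_lt e).mpr hrev
    exact (hrel _ _ this).2 hfalse


lemma big_block (ht : IsTournament r)
    (hdiff : ∀ x y : X, x ≠ y →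
      ({v | r x v} \ {v | r y v} : Set X).Infinite ∧
      ({v | r y v} \ {v | r x v} : Set X).Infinite)
    (P : Finset X) {x y : X} (hxy : x ≠ y) (k : ℕ) :
    ∃ B : Finset X, B.card = k ∧ (∀ b ∈ B, r x b ∧ r b y) ∧ Disjoint B P ∧
      (∀ a ∈ B, ∀ b ∈ B, ∀ c ∈ B, r a b → r b c → r a c) ∧
      (∀ v ∈ P, (∀ b ∈ B, r v b) ∨ (∀ b ∈ B, r b v)) := by
  classical
  have hS1 : ({v : X | r x v ∧ r v y} \ ↑P).Infinite :=
    (witness_infinite ht hdiff hxy).diff P.finite_toSet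
  obtain ⟨T, hTsub, hTinf, hTtype⟩ := const_type ht P _ hS1
  obtain ⟨B, hBsub, hBcard, hBtrans⟩ := exists_trans_subset ht T hTinf k
  have hBS : ∀ b ∈ B, (r x b ∧ r b y) ∧ b ∉ (P : Set X) := by
    intro b hb
    have := hTsub (hBsub hb)
    exact ⟨this.1, this.2⟩
  refine ⟨B, hBcard, fun b hb => (hBS b hb).1, ?_, hBtrans, ?_⟩
  · rw [Finset.disjoint_left]
    intro b hb hbP
    exact (hBS b hb).2 (by exact_mod_cast hbP)
  · intro v hv
    rcases hTtype v hv with h | h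
    · exact Or.inl (fun b hb => h b (hBsub hb))
    · refine Or.inr (fun b hb => ?_)
      have hbv : b ≠ v := by
        intro hbv
        exact (hBS b hb).2 (by simpa [hbv] using hv)
      exact (ht.2 b v hbv).mpr (h b (hBsub hb))


lemma geom_sum_aux (c : ℕ) : ∀ q : ℕ, (∑ i ∈ Finset.range q, c * 2 ^ i) + c = c * 2 ^ q := by
  intro q
  induction q with
  | zero => simp
  | succ q ih =>
    rw [Finset.sum_range_succ]
    have : c * 2 ^ (q + 1) = c * 2 ^ q + c * 2 ^ q := by ring
    omega

lemma rigid_config [DecidableEq X] (ht : IsTournament r)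
    (U : Finset X) (m : ℕ) (Bl : ℕ → Finset X)
    (hBcard : ∀ q < m, (Bl q).card = (U.card + 3) * 2 ^ q)
    (hdisjU : ∀ q < m, Disjoint (Bl q) U)
    (hdisjB : ∀ q < m, ∀ q' < m, q ≠ q' → Disjoint (Bl q) (Bl q'))
    (htrans : ∀ q < m, ∀ a ∈ Bl q, ∀ b ∈ Bl q, ∀ c ∈ Bl q, r a b → r b c → r a c)
    (hunif : ∀ q < m, ∀ v ∈ U ∪ (Finset.range m).biUnion Bl, v ∉ Bl q →
        (∀ b ∈ Bl q, r v b) ∨ (∀ b ∈ Bl q, r b v))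
    (hpairs : ∀ u ∈ U, ∀ u' ∈ U, u ≠ u' → ∃ q, q < m ∧ ∀ b ∈ Bl q, r u b ∧ r b u')
    (g : X → X)
    (hgmem : ∀ v ∈ U ∪ (Finset.range m).biUnion Bl, g v ∈ U ∪ (Finset.range m).biUnion Bl)
    (hginj : Set.InjOn g ↑(U ∪ (Finset.range m).biUnion Bl))
    (hgsurj : ∀ v ∈ U ∪ (Finset.range m).biUnion Bl,
        ∃ w ∈ U ∪ (Finset.range m).biUnion Bl, g w = v)
    (hgr : ∀ a ∈ U ∪ (Finset.range m).biUnion Bl, ∀ b ∈ U ∪ (Finset.range m).biUnion Bl,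
        (r a b ↔ r (g a) (g b))) :
    ∀ v ∈ U ∪ (Finset.range m).biUnion Bl, g v = v := by
  classical
  set n := U.card with hn
  set V := U ∪ (Finset.range m).biUnion Bl with hVdef
  set ℓ : ℕ → ℕ := fun q => (n + 3) * 2 ^ q with hℓ
  have hℓ3 : ∀ q, 3 ≤ ℓ q := by
    intro q
    have h1 : 1 ≤ 2 ^ q := Nat.one_le_two_pow
    have : (n + 3) * 1 ≤ (n + 3) * 2 ^ q := Nat.mul_le_mul_left _ h1
    simp only [hℓ]; omega
  have hBV : ∀ q, q < m → ∀ b ∈ Bl q, b ∈ V := by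
    intro q hq b hb
    exact Finset.mem_union_right _ (Finset.mem_biUnion.mpr ⟨q, Finset.mem_range.mpr hq, hb⟩)
  set deg : X → ℕ := fun v => (V.filter (fun w => r v w)).card with hdeg
  set hgt : ℕ → X → ℕ := fun q b => ((Bl q).filter (fun w => r b w)).card with hhgt
  -- F1 : degrees preserved
  have F1 : ∀ v ∈ V, deg (g v) = deg v := by
    intro v hv
    have : (V.filter (fun w => r v w)).card = (V.filter (fun w => r (g v) w)).card := by
      refine Finset.card_bij (fun a _ => g a) ?_ ?_ ?_
      · intro a ha
        rw [Finset.mem_filter] at ha ⊢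
        exact ⟨hgmem a ha.1, (hgr v hv a ha.1).mp ha.2⟩
      · intro a₁ ha₁ a₂ ha₂ hgeq
        exact hginj (Finset.mem_coe.mpr (Finset.mem_filter.mp ha₁).1)
          (Finset.mem_coe.mpr (Finset.mem_filter.mp ha₂).1) hgeq
      · intro b hb
        rw [Finset.mem_filter] at hb
        obtain ⟨w, hwV, rfl⟩ := hgsurj b hb.1
        exact ⟨w, Finset.mem_filter.mpr ⟨hwV, (hgr v hv w hwV).mpr hb.2⟩, rfl⟩
    simp only [hdeg]
    omega
  -- F2 : degree decomposition
  have F2 : ∀ q, q < m → ∀ b ∈ Bl q, ∀ b' ∈ Bl q,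
      deg b + hgt q b' = deg b' + hgt q b := by
    intro q hq b hb b' hb'
    have hsplit : ∀ c ∈ Bl q, deg c = hgt q c + ((V \ Bl q).filter (fun w => r c w)).card := by
      intro c hc
      have hsub : Bl q ⊆ V := fun x hx => hBV q hq x hx
      have hU : Bl q ∪ V \ Bl q = V := Finset.union_sdiff_of_subset hsub
      have : V.filter (fun w => r c w) =
          (Bl q).filter (fun w => r c w) ∪ (V \ Bl q).filter (fun w => r c w) := by
        rw [← Finset.filter_union, hU]
      simp only [hdeg]
      rw [this, Finset.card_union_of_disjoint]
      exact Finset.disjoint_filter_filter (Finset.disjoint_sdiff)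
    have hext : (V \ Bl q).filter (fun w => r b w) = (V \ Bl q).filter (fun w => r b' w) := by
      apply Finset.filter_congr
      intro w hw
      rw [Finset.mem_sdiff] at hw
      rcases hunif q hq w hw.1 hw.2 with h | h
      · exact iff_of_false (tourn_asymm ht (h b hb)) (tourn_asymm ht (h b' hb'))
      · exact iff_of_true (h b hb) (h b' hb')
    rw [hsplit b hb, hsplit b' hb', hext]
    omega
  -- F3 : order vs heights
  have F3fwd : ∀ q, q < m → ∀ b ∈ Bl q, ∀ b' ∈ Bl q, r b b' → hgt q b' < hgt q b := by
    intro q hq b hb b' hb' hr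
    have hsub : (Bl q).filter (fun w => r b' w) ⊆ (Bl q).filter (fun w => r b w) := by
      intro w hw
      rw [Finset.mem_filter] at hw ⊢
      exact ⟨hw.1, htrans q hq b hb b' hb' w hw.1 hr hw.2⟩
    have hss : (Bl q).filter (fun w => r b' w) ⊂ (Bl q).filter (fun w => r b w) := by
      rw [Finset.ssubset_iff_of_subset hsub]
      exact ⟨b', Finset.mem_filter.mpr ⟨hb', hr⟩,
        fun hmem => (ht.1 b') (Finset.mem_filter.mp hmem).2⟩
    exact Finset.card_lt_card hss
  have F3 : ∀ q, q < m → ∀ b ∈ Bl q, ∀ b' ∈ Bl q, b ≠ b' →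
      (r b b' ↔ hgt q b' < hgt q b) := by
    intro q hq b hb b' hb' hne
    constructor
    · exact F3fwd q hq b hb b' hb'
    · intro hlt
      rcases tourn_total ht hne with h | h
      · exact h
      · exact absurd (F3fwd q hq b' hb' b hb h) (by omega)
  -- F3' : height injective
  have F3' : ∀ q, q < m → ∀ b ∈ Bl q, ∀ b' ∈ Bl q, hgt q b = hgt q b' → b = b' := by
    intro q hq b hb b' hb' heq
    by_contra hne
    rcases tourn_total ht hne with h | h
    · have := (F3 q hq b hb b' hb' hne).mp h; omega
    · have := (F3 q hq b' hb' b hb (Ne.symm hne)).mp h; omega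
  -- F4 : height bound
  have F4 : ∀ q, q < m → ∀ b ∈ Bl q, hgt q b < ℓ q := by
    intro q hq b hb
    have hsub : (Bl q).filter (fun w => r b w) ⊆ (Bl q).erase b := by
      intro w hw
      rw [Finset.mem_filter] at hw
      rw [Finset.mem_erase]
      refine ⟨fun hwb => (ht.1 b) (hwb ▸ hw.2), hw.1⟩
    have h1 := Finset.card_le_card hsub
    have h2 := Finset.card_erase_of_mem hb
    have h3 := hBcard q hq
    have h4 := hℓ3 q
    simp only [hhgt, hℓ] at *
    omega
  -- F5 : height surjective
  have F5 : ∀ q, q < m → ∀ t, t < ℓ q → ∃ b ∈ Bl q, hgt q b = t := by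
    intro q hq t htl
    have hinjOn : Set.InjOn (hgt q) ↑(Bl q) := by
      intro a ha b hb hab
      exact F3' q hq a (Finset.mem_coe.mp ha) b (Finset.mem_coe.mp hb) hab
    have hsub : (Bl q).image (hgt q) ⊆ Finset.range (ℓ q) := by
      intro x hx
      rw [Finset.mem_image] at hx
      obtain ⟨b, hb, rfl⟩ := hx
      exact Finset.mem_range.mpr (F4 q hq b hb)
    have hcard : ((Bl q).image (hgt q)).card = ℓ q := by
      rw [Finset.card_image_of_injOn hinjOn, hBcard q hq]
    have : (Bl q).image (hgt q) = Finset.range (ℓ q) :=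
      Finset.eq_of_subset_of_card_le hsub (by rw [hcard, Finset.card_range])
    have ht' : t ∈ (Bl q).image (hgt q) := by
      rw [this]; exact Finset.mem_range.mpr htl
    rw [Finset.mem_image] at ht'
    obtain ⟨b, hb, hbt⟩ := ht'
    exact ⟨b, hb, hbt⟩
  -- T1 : adjacent heights are twins
  have T1 : ∀ q, q < m → ∀ a ∈ Bl q, ∀ b ∈ Bl q, hgt q b = hgt q a + 1 →
      ∀ w ∈ V, w ≠ a → w ≠ b → (r a w ↔ r b w) := by
    intro q hq a ha b hb hab w hwV hwa hwb
    by_cases hwBl : w ∈ Bl q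
    · have h1 := F3 q hq a ha w hwBl (Ne.symm hwa)
      have h2 := F3 q hq b hb w hwBl (Ne.symm hwb)
      have hne1 : hgt q w ≠ hgt q a := fun h => hwa (F3' q hq w hwBl a ha h)
      have hne2 : hgt q w ≠ hgt q b := fun h => hwb (F3' q hq w hwBl b hb h)
      rw [h1, h2]
      omega
    · rcases hunif q hq w hwV hwBl with h | h
      · exact iff_of_false (tourn_asymm ht (h a ha)) (tourn_asymm ht (h b hb))
      · exact iff_of_true (h a ha) (h b hb)
  -- T2 : classification of twins of interior vertices
  have T2 : ∀ q, q < m → ∀ a ∈ Bl q, 0 < hgt q a → hgt q a + 1 < ℓ q →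
      ∀ v ∈ V, v ≠ a → (∀ w ∈ V, w ≠ a → w ≠ v → (r a w ↔ r v w)) → v ∈ Bl q := by
    intro q hq a ha h0 h1 v hvV hva hcond
    by_contra hvBl
    obtain ⟨bp, hbp, hbph⟩ := F5 q hq (hgt q a + 1) h1
    obtain ⟨bm, hbm, hbmh⟩ := F5 q hq (hgt q a - 1) (by omega)
    rcases hunif q hq v hvV hvBl with h | h
    · -- v beats the whole block; use b⁺
      have hbpa : bp ≠ a := fun he => by rw [he] at hbph; omega
      have hbpv : bp ≠ v := fun he => hvBl (he ▸ hbp)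
      have := hcond bp (hBV q hq bp hbp) hbpa hbpv
      have hra : ¬ r a bp := by
        rw [F3 q hq a ha bp hbp (Ne.symm hbpa)]
        omega
      exact hra (this.mpr (h bp hbp))
    · -- block beats v; use b⁻
      have hbma : bm ≠ a := fun he => by rw [he] at hbmh; omega
      have hbmv : bm ≠ v := fun he => hvBl (he ▸ hbm)
      have := hcond bm (hBV q hq bm hbm) hbma hbmv
      have hra : r a bm := by
        rw [F3 q hq a ha bm hbm (Ne.symm hbma)]
        omega
      exact (tourn_asymm ht (h bm hbm)) (this.mp hra)
  -- avoidance of pointwise-fixed blocks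
  have havoid : ∀ q', q' < m → (∀ b ∈ Bl q', g b = b) → ∀ x ∈ V, g x ∈ Bl q' → x ∈ Bl q' := by
    intro q' hq' hfix x hxV hgx
    have h1 : g (g x) = g x := hfix (g x) hgx
    have : x = g x :=
      hginj (Finset.mem_coe.mpr hxV) (Finset.mem_coe.mpr (hgmem x hxV)) h1.symm
    exact this ▸ hgx
  -- main fixing step
  have stepFix : ∀ q, q < m → (∀ q', q < q' → q' < m → ∀ b ∈ Bl q', g b = b) →
      ∀ b ∈ Bl q, g b = b := by
    intro q hq hHigher
    obtain ⟨bot, hbot, hboth⟩ := F5 q hq 0 (by have := hℓ3 q; omega)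
    obtain ⟨top, htop, htoph⟩ := F5 q hq (ℓ q - 1) (by have := hℓ3 q; omega)
    have hbt : bot ≠ top := by
      intro he
      rw [he] at hboth
      have := hℓ3 q
      omega
    set I := ((Bl q).erase bot).erase top with hI
    have hImem : ∀ b ∈ I, b ∈ Bl q ∧ 0 < hgt q b ∧ hgt q b + 1 < ℓ q := by
      intro b hb
      rw [hI, Finset.mem_erase, Finset.mem_erase] at hb
      obtain ⟨hbtop, hbbot, hbBl⟩ := hb
      have hb0 : hgt q b ≠ 0 := fun h => hbbot (F3' q hq b hbBl bot hbot (h.trans hboth.symm))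
      have hbt' : hgt q b ≠ ℓ q - 1 := fun h => hbtop (F3' q hq b hbBl top htop (h.trans htoph.symm))
      have := F4 q hq b hbBl
      exact ⟨hbBl, by omega, by omega⟩
    have hIcard : I.card + 2 = ℓ q := by
      rw [hI, Finset.card_erase_of_mem (Finset.mem_erase.mpr ⟨Ne.symm hbt, htop⟩),
        Finset.card_erase_of_mem hbot, hBcard q hq]
      have := hℓ3 q
      simp only [hℓ] at *
      omega
    -- capacity: some interior vertex stays in the block
    have hcap : ∃ b ∈ I, g b ∈ Bl q := by
      by_contra hc
      push_neg at hc
      have hIV : ∀ b ∈ I, b ∈ V := fun b hb => hBV q hq b (hImem b hb).1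
      have himg : I.image g ⊆ U ∪ (Finset.range q).biUnion Bl := by
        intro x hx
        rw [Finset.mem_image] at hx
        obtain ⟨b, hb, rfl⟩ := hx
        have hgbV : g b ∈ V := hgmem b (hIV b hb)
        rw [hVdef] at hgbV
        rcases Finset.mem_union.mp hgbV with h | h
        · exact Finset.mem_union_left _ h
        · rw [Finset.mem_biUnion] at h
          obtain ⟨q'', hq''m, hq''⟩ := h
          rw [Finset.mem_range] at hq''m
          have hne : q'' ≠ q := by
            intro he
            exact hc b hb (he ▸ hq'')
          have hlt : q'' < q := by
            rcases Nat.lt_or_ge q'' q with h' | h'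
            · exact h'
            · exfalso
              have hq'' : q < q'' := by omega
              have := havoid q'' hq''m (hHigher q'' hq'' hq''m) b (hIV b hb) ‹g b ∈ Bl _›
              exact (Finset.disjoint_left.mp (hdisjB q hq q'' hq''m (by omega))) (hImem b hb).1 this
          exact Finset.mem_union_right _
            (Finset.mem_biUnion.mpr ⟨q'', Finset.mem_range.mpr hlt, hq''⟩)
      have hicard : (I.image g).card = I.card := by
        apply Finset.card_image_of_injOn
        intro a ha b hb hab
        exact hginj (Finset.mem_coe.mpr (hIV a ha)) (Finset.mem_coe.mpr (hIV b hb)) hab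
      have hle := Finset.card_le_card himg
      have hub : (U ∪ (Finset.range q).biUnion Bl).card ≤ n + ∑ i ∈ Finset.range q, ℓ i := by
        calc (U ∪ (Finset.range q).biUnion Bl).card
            ≤ U.card + ((Finset.range q).biUnion Bl).card := Finset.card_union_le _ _
          _ ≤ n + ∑ i ∈ Finset.range q, (Bl i).card := by
              have := Finset.card_biUnion_le (s := Finset.range q) (t := Bl)
              omega
          _ = n + ∑ i ∈ Finset.range q, ℓ i := by
              congr 1
              apply Finset.sum_congr rfl
              intro i hi
              exact hBcard i (lt_trans (Finset.mem_range.mp hi) hq)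
      have hgeo := geom_sum_aux (n + 3) q
      simp only [hℓ] at *
      omega
    obtain ⟨b₀, hb₀I, hb₀g⟩ := hcap
    obtain ⟨hb₀Bl, hb₀0, hb₀1⟩ := hImem b₀ hb₀I
    have hfix₀ : g b₀ = b₀ := by
      have h1 := F2 q hq b₀ hb₀Bl (g b₀) hb₀g
      have h2 := F1 b₀ (hBV q hq b₀ hb₀Bl)
      have : hgt q (g b₀) = hgt q b₀ := by omega
      exact F3' q hq (g b₀) hb₀g b₀ hb₀Bl this
    -- one propagation step
    have hstep : ∀ a ∈ Bl q, ∀ b ∈ Bl q, g a = a → 0 < hgt q a → hgt q a + 1 < ℓ q →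
        (hgt q b = hgt q a + 1 ∨ hgt q b + 1 = hgt q a) → g b = b := by
      intro a ha b hb hfa ha0 ha1 hadj
      have hab : a ≠ b := by
        intro he
        rw [he] at hadj
        omega
      have htw : ∀ w ∈ V, w ≠ a → w ≠ b → (r a w ↔ r b w) := by
        rcases hadj with h | h
        · exact T1 q hq a ha b hb h
        · intro w hwV hwa hwb
          exact (T1 q hq b hb a ha (by omega) w hwV hwb hwa).symm
      have hbV : b ∈ V := hBV q hq b hb
      have haV : a ∈ V := hBV q hq a ha
      have hgbV : g b ∈ V := hgmem b hbV
      have hgba : g b ≠ a := by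
        intro he
        have : g b = g a := by rw [he, hfa]
        have := hginj (Finset.mem_coe.mpr hbV) (Finset.mem_coe.mpr haV) this
        rw [this] at hadj
        omega
      have hcond : ∀ w ∈ V, w ≠ a → w ≠ g b → (r a w ↔ r (g b) w) := by
        intro w hwV hwa hwgb
        obtain ⟨w₀, hw₀V, rfl⟩ := hgsurj w hwV
        have hw₀b : w₀ ≠ b := fun he => hwgb (by rw [he])
        have hw₀a : w₀ ≠ a := fun he => hwa (by rw [he, hfa])
        calc r a (g w₀) ↔ r (g a) (g w₀) := by rw [hfa]
          _ ↔ r a w₀ := (hgr a haV w₀ hw₀V).symm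
          _ ↔ r b w₀ := htw w₀ hw₀V hw₀a hw₀b
          _ ↔ r (g b) (g w₀) := hgr b hbV w₀ hw₀V
      have hgbBl : g b ∈ Bl q := T2 q hq a ha ha0 ha1 (g b) hgbV hgba hcond
      have h1 := F2 q hq b hb (g b) hgbBl
      have h2 := F1 b hbV
      have : hgt q (g b) = hgt q b := by omega
      exact F3' q hq (g b) hgbBl b hb this
    -- propagate up
    have hup : ∀ t, ∀ b ∈ Bl q, hgt q b = hgt q b₀ + t → g b = b := by
      intro t
      induction t with
      | zero =>
        intro b hb hbh
        have : b = b₀ := F3' q hq b hb b₀ hb₀Bl (by omega)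
        rw [this, hfix₀]
      | succ t iht =>
        intro b hb hbh
        have hblt := F4 q hq b hb
        obtain ⟨a, ha, hah⟩ := F5 q hq (hgt q b₀ + t) (by omega)
        have hfa : g a = a := iht a ha hah
        exact hstep a ha b hb hfa (by omega) (by omega) (by omega)
    -- propagate down
    have hdown : ∀ t, ∀ b ∈ Bl q, hgt q b + t = hgt q b₀ → g b = b := by
      intro t
      induction t with
      | zero =>
        intro b hb hbh
        have : b = b₀ := F3' q hq b hb b₀ hb₀Bl (by omega)
        rw [this, hfix₀]
      | succ t iht =>
        intro b hb hbh
        obtain ⟨a, ha, hah⟩ := F5 q hq (hgt q b + 1) (by omega)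
        have hfa : g a = a := iht a ha (by omega)
        exact hstep a ha b hb hfa (by omega) (by omega) (by omega)
    intro b hb
    rcases le_or_gt (hgt q b₀) (hgt q b) with h | h
    · exact hup (hgt q b - hgt q b₀) b hb (by omega)
    · exact hdown (hgt q b₀ - hgt q b) b hb (by omega)
  -- all blocks are pointwise fixed
  have allFix : ∀ q, q < m → ∀ b ∈ Bl q, g b = b := by
    have key : ∀ t, ∀ q, q < m → m ≤ q + t → ∀ b ∈ Bl q, g b = b := by
      intro t
      induction t with
      | zero => intro q hq hle; omega
      | succ t iht =>
        intro q hq hle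
        exact stepFix q hq (fun q' hq' hq'm => iht q' hq'm (by omega))
    exact fun q hq => key m q hq (by omega)
  -- conclusion
  intro v hv
  rw [hVdef] at hv
  rcases Finset.mem_union.mp hv with hvU | hvB
  · have hvV : v ∈ V := hv
    have hgvV : g v ∈ V := hgmem v hvV
    have hgvU : g v ∈ U := by
      rw [hVdef] at hgvV
      rcases Finset.mem_union.mp hgvV with h | h
      · exact h
      · exfalso
        rw [Finset.mem_biUnion] at h
        obtain ⟨q'', hq''m, hq''⟩ := h
        rw [Finset.mem_range] at hq''m
        have := havoid q'' hq''m (allFix q'' hq''m) v hvV hq''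
        exact (Finset.disjoint_left.mp (hdisjU q'' hq''m)) this hvU
    by_contra hne
    obtain ⟨q, hq, hblock⟩ := hpairs v hvU (g v) hgvU (fun h => hne h.symm)
    have hBne : (Bl q).Nonempty := by
      rw [← Finset.card_pos, hBcard q hq]
      have := hℓ3 q
      simp only [hℓ] at this
      omega
    obtain ⟨b, hb⟩ := hBne
    have hfb : g b = b := allFix q hq b hb
    have h1 : r v b := (hblock b hb).1
    have h2 : r b (g v) := (hblock b hb).2
    have h3 : r (g v) (g b) := (hgr v hvV b (hBV q hq b hb)).mp h1
    rw [hfb] at h3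
    exact (tourn_asymm ht h2) h3
  · rw [Finset.mem_biUnion] at hvB
    obtain ⟨q, hqm, hq⟩ := hvB
    rw [Finset.mem_range] at hqm
    exact allFix q hqm v hq


end Statement15Aux

/-- an infinite tournament in which Γ⁺(x) \ Γ⁺(y) and Γ⁺(y) \ Γ⁺(x) are
    infinite for all distinct x, y is cofinally rigid. -/
theorem stmt15 {X : Type*} [Infinite X] (r : X → X → Prop) (ht : IsTournament r)
    (hdiff : ∀ x y : X, x ≠ y →
      ({v | r x v} \ {v | r y v} : Set X).Infinite ∧
      ({v | r y v} \ {v | r x v} : Set X).Infinite) :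
    ∀ U : Finset X, ∃ V : Finset X, U ⊆ V ∧
      ∀ f : {x // x ∈ V} ≃ {x // x ∈ V},
        (∀ a b : {x // x ∈ V}, r (a : X) (b : X) ↔ r (f a : X) (f b : X)) →
        ∀ a : {x // x ∈ V}, f a = a := by

  classical
  intro U
  by_cases hU1 : U.card ≤ 1
  · refine ⟨U, subset_rfl, ?_⟩
    intro f _ a
    have hsub := Finset.card_le_one.mp hU1
    exact Subtype.ext (hsub _ (f a).2 _ a.2)
  · push_neg at hU1
    set n := U.card with hn
    obtain ⟨u₁, hu₁, u₂, hu₂, hu12⟩ := Finset.one_lt_card.mp hU1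
    set Qp := (U ×ˢ U).filter (fun p => p.1 ≠ p.2) with hQp
    set m := Qp.card with hm
    set pairs : ℕ → X × X :=
      fun q => if h : q < m then ((Qp.equivFin.symm ⟨q, h⟩ : X × X)) else (u₁, u₂) with hpairs
    have hQmem : ∀ p ∈ Qp, p.1 ∈ U ∧ p.2 ∈ U ∧ p.1 ≠ p.2 := by
      intro p hp
      rw [hQp, Finset.mem_filter, Finset.mem_product] at hp
      exact ⟨hp.1.1, hp.1.2, hp.2⟩
    have hpmem : ∀ q, (pairs q).1 ∈ U ∧ (pairs q).2 ∈ U ∧ (pairs q).1 ≠ (pairs q).2 := by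
      intro q
      simp only [hpairs]
      split
      · exact hQmem _ (Qp.equivFin.symm ⟨q, ‹_›⟩).2
      · exact ⟨hu₁, hu₂, hu12⟩
    have hpsurj : ∀ u ∈ U, ∀ u' ∈ U, u ≠ u' → ∃ q, q < m ∧ pairs q = (u, u') := by
      intro u hu u' hu' hne
      have hmemQ : (u, u') ∈ Qp := by
        rw [hQp, Finset.mem_filter, Finset.mem_product]
        exact ⟨⟨hu, hu'⟩, hne⟩
      refine ⟨(Qp.equivFin ⟨(u, u'), hmemQ⟩ : Fin m).1,
        (Qp.equivFin ⟨(u, u'), hmemQ⟩ : Fin m).2, ?_⟩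
      simp only [hpairs]
      rw [dif_pos]
      have : (⟨(Qp.equivFin ⟨(u, u'), hmemQ⟩ : Fin m).1,
          (Qp.equivFin ⟨(u, u'), hmemQ⟩ : Fin m).2⟩ : Fin m) = Qp.equivFin ⟨(u, u'), hmemQ⟩ :=
        Fin.eta _ _
      rw [this, Equiv.symm_apply_apply]
      exact (Qp.equivFin ⟨(u, u'), hmemQ⟩ : Fin m).2
    set K : ℕ → ℕ := fun q => 2 ^ m * ((n + 3) * 2 ^ q) with hK
    -- stage construction
    have hstages : ∀ j : ℕ, ∃ B : ℕ → Finset X,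
        ∀ q, q < j →
          (∀ b ∈ B q, r (pairs q).1 b ∧ r b (pairs q).2) ∧
          (B q).card = K q ∧
          Disjoint (B q) (U ∪ (Finset.range q).biUnion B) ∧
          (∀ a ∈ B q, ∀ b ∈ B q, ∀ c ∈ B q, r a b → r b c → r a c) ∧
          (∀ v ∈ U ∪ (Finset.range q).biUnion B, (∀ b ∈ B q, r v b) ∨ (∀ b ∈ B q, r b v)) := by
      intro j
      induction j with
      | zero => exact ⟨fun _ => ∅, fun q hq => absurd hq (by omega)⟩
      | succ j ih =>
        obtain ⟨B, hB⟩ := ih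
        obtain ⟨NB, hNBcard, hNBpair, hNBdisj, hNBtrans, hNBunif⟩ :=
          big_block ht hdiff (U ∪ (Finset.range j).biUnion B) (hpmem j).2.2 (K j)
        set B' : ℕ → Finset X := fun q => if q = j then NB else B q with hB'
        refine ⟨B', ?_⟩
        have hB'j : B' j = NB := by simp [hB']
        have hB'q : ∀ q, q ≠ j → B' q = B q := by
          intro q hq
          simp [hB', hq]
        have hbiU : ∀ q, q ≤ j →
            (Finset.range q).biUnion B' = (Finset.range q).biUnion B := by
          intro q hq
          apply Finset.biUnion_congr rfl
          intro i hi
          rw [Finset.mem_range] at hi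
          exact hB'q i (by omega)
        intro q hq
        by_cases hqj : q = j
        · subst hqj
          rw [hB'j, hbiU q le_rfl]
          exact ⟨hNBpair, hNBcard, hNBdisj, hNBtrans, hNBunif⟩
        · rw [hB'q q hqj, hbiU q (by omega)]
          exact hB q (by omega)
    obtain ⟨B, hB⟩ := hstages m
    have hKpos : ∀ q, 0 < K q := by
      intro q
      have h2m : 0 < 2 ^ m := Nat.pow_pos (by norm_num)
      have h2q : 0 < 2 ^ q := Nat.pow_pos (by norm_num)
      simp only [hK]
      exact Nat.mul_pos h2m (Nat.mul_pos (by omega) h2q)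
    have hBne : ∀ q, q < m → (B q).Nonempty := by
      intro q hq
      rw [← Finset.card_pos, (hB q hq).2.1]
      exact hKpos q
    set rep : ℕ → X := fun q' => if h : (B q').Nonempty then h.choose else u₁ with hrep
    have hrepmem : ∀ q', q' < m → rep q' ∈ B q' := by
      intro q' hq'
      simp only [hrep]
      rw [dif_pos (hBne q' hq')]
      exact (hBne q' hq').choose_spec
    -- thinning
    have hthin : ∀ q, ∃ C : Finset X, q < m →
        C ⊆ B q ∧ C.card = (n + 3) * 2 ^ q ∧
        ∀ b ∈ C, ∀ b' ∈ C, ∀ q', q' < m → (r b (rep q') ↔ r b' (rep q')) := by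
      intro q
      by_cases hq : q < m
      · set pat : X → (Fin m → Bool) :=
          fun b => fun i => Decidable.decide (r b (rep i.1)) with hpat
        have hmapsto : ∀ b ∈ B q, pat b ∈ (Finset.univ : Finset (Fin m → Bool)) :=
          fun b _ => Finset.mem_univ _
        have hcards : (Finset.univ : Finset (Fin m → Bool)).card * ((n + 3) * 2 ^ q)
            ≤ (B q).card := by
          rw [(hB q hq).2.1]
          have : (Finset.univ : Finset (Fin m → Bool)).card = 2 ^ m := by
            rw [Finset.card_univ]
            simp [Fintype.card_fun]
          rw [this, hK]
        obtain ⟨p₀, _, hfib⟩ := Finset.exists_le_card_fiber_of_mul_le_card_of_maps_to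
          hmapsto Finset.univ_nonempty hcards
        obtain ⟨C, hCsub, hCcard⟩ := Finset.exists_subset_card_eq hfib
        refine ⟨C, fun _ => ⟨?_, hCcard, ?_⟩⟩
        · exact hCsub.trans (Finset.filter_subset _ _)
        · intro b hb b' hb' q' hq'm
          have h1 : pat b = p₀ := (Finset.mem_filter.mp (hCsub hb)).2
          have h2 : pat b' = p₀ := (Finset.mem_filter.mp (hCsub hb')).2
          have : pat b ⟨q', hq'm⟩ = pat b' ⟨q', hq'm⟩ := by rw [h1, h2]
          simpa [hpat] using this
      · exact ⟨∅, fun h => absurd h hq⟩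
    choose Bl hBl using hthin
    -- verify the rigid configuration
    have hBlsub : ∀ q, q < m → Bl q ⊆ B q := fun q hq => (hBl q hq).1
    have hBlcard : ∀ q, q < m → (Bl q).card = (n + 3) * 2 ^ q := fun q hq => (hBl q hq).2.1
    have hBsubP : ∀ q q', q < q' → q' < m → B q ⊆ (Finset.range q').biUnion B := by
      intro q q' hlt hq' x hx
      exact Finset.mem_biUnion.mpr ⟨q, Finset.mem_range.mpr hlt, hx⟩
    have hdisjU : ∀ q, q < m → Disjoint (Bl q) U := by
      intro q hq
      have := (hB q hq).2.2.1
      rw [Finset.disjoint_union_right] at this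
      exact Finset.disjoint_of_subset_left (hBlsub q hq) this.1
    have hdisjB : ∀ q, q < m → ∀ q', q' < m → q ≠ q' → Disjoint (Bl q) (Bl q') := by
      intro q hq q' hq' hne
      rcases Nat.lt_or_ge q' q with h | h
      · have hd := (hB q hq).2.2.1
        rw [Finset.disjoint_union_right] at hd
        have : Disjoint (B q) (B q') :=
          Finset.disjoint_of_subset_right (hBsubP q' q h hq) hd.2
        exact Finset.disjoint_of_subset_left (hBlsub q hq)
          (Finset.disjoint_of_subset_right (hBlsub q' hq') this)
      · have hlt : q < q' := by omega
        have hd := (hB q' hq').2.2.1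
        rw [Finset.disjoint_union_right] at hd
        have : Disjoint (B q') (B q) :=
          Finset.disjoint_of_subset_right (hBsubP q q' hlt hq') hd.2
        exact Finset.disjoint_of_subset_left (hBlsub q hq)
          (Finset.disjoint_of_subset_right (hBlsub q' hq') this.symm)
    have htransB : ∀ q, q < m → ∀ a ∈ Bl q, ∀ b ∈ Bl q, ∀ c ∈ Bl q, r a b → r b c → r a c := by
      intro q hq a ha b hb c hc
      exact (hB q hq).2.2.2.1 a (hBlsub q hq ha) b (hBlsub q hq hb) c (hBlsub q hq hc)
    have hunifB : ∀ q, q < m → ∀ v ∈ U ∪ (Finset.range m).biUnion Bl, v ∉ Bl q →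
        (∀ b ∈ Bl q, r v b) ∨ (∀ b ∈ Bl q, r b v) := by
      intro q hq v hv hvBl
      rcases Finset.mem_union.mp hv with hvU | hvB
      · rcases (hB q hq).2.2.2.2 v (Finset.mem_union_left _ hvU) with h | h
        · exact Or.inl (fun b hb => h b (hBlsub q hq hb))
        · exact Or.inr (fun b hb => h b (hBlsub q hq hb))
      · rw [Finset.mem_biUnion] at hvB
        obtain ⟨q'', hq''m, hq''⟩ := hvB
        rw [Finset.mem_range] at hq''m
        have hvBq'' : v ∈ B q'' := hBlsub q'' hq''m hq''
        rcases Nat.lt_trichotomy q'' q with hlt | heq | hgt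
        · rcases (hB q hq).2.2.2.2 v
            (Finset.mem_union_right _ (hBsubP q'' q hlt hq hvBq'')) with h | h
          · exact Or.inl (fun b hb => h b (hBlsub q hq hb))
          · exact Or.inr (fun b hb => h b (hBlsub q hq hb))
        · exact absurd (heq ▸ hq'') hvBl
        · -- q < q'' : use pattern constancy
          have hiff : ∀ b ∈ Bl q, ∀ b' ∈ Bl q, (r b v ↔ r b' v) := by
            intro b hb b' hb'
            have hkey : ∀ c ∈ Bl q, (r c v ↔ r c (rep q'')) := by
              intro c hc
              have hcP : c ∈ U ∪ (Finset.range q'').biUnion B :=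
                Finset.mem_union_right _ (hBsubP q q'' hgt hq''m (hBlsub q hq hc))
              rcases (hB q'' hq''m).2.2.2.2 c hcP with h | h
              · exact iff_of_true (h v hvBq'') (h (rep q'') (hrepmem q'' hq''m))
              · exact iff_of_false (tourn_asymm ht (h v hvBq''))
                  (tourn_asymm ht (h (rep q'') (hrepmem q'' hq''m)))
            rw [hkey b hb, hkey b' hb']
            exact (hBl q hq).2.2 b hb b' hb' q'' hq''m
          obtain ⟨bs, hbs⟩ : (Bl q).Nonempty := by
            rw [← Finset.card_pos, hBlcard q hq]
            exact Nat.mul_pos (by omega) (Nat.pow_pos (by norm_num))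
          by_cases hbv : r bs v
          · exact Or.inr (fun b hb => (hiff b hb bs hbs).mpr hbv)
          · refine Or.inl (fun b hb => ?_)
            have hnb : ¬ r b v := fun h => hbv ((hiff b hb bs hbs).mp h)
            have hne : v ≠ b := by
              intro he
              have hd := (hB q'' hq''m).2.2.1
              rw [Finset.disjoint_union_right] at hd
              exact (Finset.disjoint_left.mp hd.2) hvBq''
                (hBsubP q q'' hgt hq''m (hBlsub q hq (he ▸ hb)))
            exact (ht.2 v b hne).mpr hnb
    have hpairsB : ∀ u ∈ U, ∀ u' ∈ U, u ≠ u' →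
        ∃ q, q < m ∧ ∀ b ∈ Bl q, r u b ∧ r b u' := by
      intro u hu u' hu' hne
      obtain ⟨q, hq, hpq⟩ := hpsurj u hu u' hu' hne
      refine ⟨q, hq, fun b hb => ?_⟩
      have := (hB q hq).1 b (hBlsub q hq hb)
      rw [hpq] at this
      exact this
    -- the final vertex set
    set Vf := U ∪ (Finset.range m).biUnion Bl with hVf
    refine ⟨Vf, Finset.subset_union_left, ?_⟩
    intro f hf a
    set g : X → X := fun x => if h : x ∈ Vf then ((f ⟨x, h⟩ : {x // x ∈ Vf}) : X) else x with hg
    have hgval : ∀ x (h : x ∈ Vf), g x = ((f ⟨x, h⟩ : {x // x ∈ Vf}) : X) := by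
      intro x h
      simp only [hg]
      rw [dif_pos h]
    have hgmem : ∀ v ∈ Vf, g v ∈ Vf := by
      intro v hv
      rw [hgval v hv]
      exact (f ⟨v, hv⟩).2
    have hginj : Set.InjOn g ↑Vf := by
      intro a₁ ha₁ a₂ ha₂ heq
      rw [hgval a₁ ha₁, hgval a₂ ha₂] at heq
      have := f.injective (Subtype.ext heq)
      exact congrArg Subtype.val this
    have hgsurj : ∀ v ∈ Vf, ∃ w ∈ Vf, g w = v := by
      intro v hv
      refine ⟨(f.symm ⟨v, hv⟩ : X), (f.symm ⟨v, hv⟩).2, ?_⟩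
      rw [hgval _ (f.symm ⟨v, hv⟩).2]
      have : (⟨(f.symm ⟨v, hv⟩ : X), (f.symm ⟨v, hv⟩).2⟩ : {x // x ∈ Vf}) = f.symm ⟨v, hv⟩ :=
        Subtype.ext rfl
      rw [this, Equiv.apply_symm_apply]
    have hgr : ∀ a ∈ Vf, ∀ b ∈ Vf, (r a b ↔ r (g a) (g b)) := by
      intro a₁ ha₁ b₁ hb₁
      rw [hgval a₁ ha₁, hgval b₁ hb₁]
      exact hf ⟨a₁, ha₁⟩ ⟨b₁, hb₁⟩
    have hfixall := rigid_config ht U m Bl hBlcard hdisjU hdisjB htransB hunifB hpairsB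
      g hgmem hginj hgsurj hgr
    have := hfixall a.1 a.2
    rw [hgval a.1 a.2] at this
    exact Subtype.ext (by simpa using this)
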